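/- Let G be a linearly ordered abelian group with finite spines and p a prime. Suppose there exist convex subgroups K_0 ⊊ K_1 ⊊ … ⊊ K_{n-1} ⊊ K_n = G with the index [K_{i+1} : K_i + pK_{i+1}] infinite for every i < n. Then there exist convex subgroups K'_0 ⊊ K'_1 ⊊ … ⊊ K'_{n-1} ⊊ K'_n = G with [K'_{i+1} : K'_i + pK'_{i+1}] infinite for every i < n and such that each K'_i (i < n) belongs to S_p, i.e., K'_i = H_p(a_i) for some a_i ∈ G. -/

import Mathlib

/-- `nH = {n • h : h ∈ H}` as a subgroup. -/
def smulSub {G : Type*} [AddCommGroup G] (n : ℕ) (H : AddSubgroup G) : AddSubgroup G :=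
  AddSubgroup.map (n • AddMonoidHom.id G) H

/-- A subgroup `H` of a linearly ordered abelian group is convex if
`0 ≤ g ≤ h` and `h ∈ H` imply `g ∈ H`. -/
def IsConvexSubgroup {G : Type*} [AddCommGroup G] [LinearOrder G] [IsOrderedAddMonoid G] (H : AddSubgroup G) : Prop :=
  ∀ g h : G, 0 ≤ g → g ≤ h → h ∈ H → g ∈ H

/-- `H_p(a)`: the largest convex subgroup `H` of `G` with `a ∉ H + pG` (equivalently the
union, i.e. supremum, of all such subgroups); it is the trivial subgroup when `a ∈ pG`. -/
def Hsub {G : Type*} [AddCommGroup G] [LinearOrder G] [IsOrderedAddMonoid G] (p : ℕ) (a : G) : AddSubgroup G :=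
  sSup {H : AddSubgroup G | IsConvexSubgroup H ∧ a ∉ H ⊔ smulSub p ⊤}

section Aux

variable {G : Type*} [AddCommGroup G] [LinearOrder G] [IsOrderedAddMonoid G]

theorem mem_smulSub {n : ℕ} {H : AddSubgroup G} {x : G} :
    x ∈ smulSub n H ↔ ∃ h ∈ H, n • h = x := by
  simp [smulSub, AddSubgroup.mem_map]

theorem smulSub_le {n : ℕ} {H : AddSubgroup G} : smulSub n H ≤ H := by
  intro x hx
  obtain ⟨h, hh, rfl⟩ := mem_smulSub.mp hx
  exact AddSubgroup.nsmul_mem H hh n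

theorem smulSub_mono {n : ℕ} {H K : AddSubgroup G} (h : H ≤ K) : smulSub n H ≤ smulSub n K :=
  AddSubgroup.map_mono h

theorem IsConvexSubgroup.mem_of_abs_le {K : AddSubgroup G} (hK : IsConvexSubgroup K)
    {x y : G} (hy : y ∈ K) (h : |x| ≤ |y|) : x ∈ K := by
  have hy' : |y| ∈ K := by rcases abs_choice y with h' | h' <;> rw [h']
    <;> [exact hy; exact neg_mem hy]
  have hx' : |x| ∈ K := hK _ _ (abs_nonneg x) h hy'
  rcases abs_choice x with h' | h'
  · rwa [h'] at hx'
  · rw [← neg_neg x, ← h']; exact neg_mem hx'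

theorem convex_total {H K : AddSubgroup G} (hH : IsConvexSubgroup H) (hK : IsConvexSubgroup K) :
    H ≤ K ∨ K ≤ H := by
  by_contra hc
  push_neg at hc
  obtain ⟨h1, h2⟩ := hc
  obtain ⟨x, hxH, hxK⟩ := SetLike.not_le_iff_exists.mp h1
  obtain ⟨y, hyK, hyH⟩ := SetLike.not_le_iff_exists.mp h2
  rcases le_total |x| |y| with h | h
  · exact hxK (hK.mem_of_abs_le hyK h)
  · exact hyH (hH.mem_of_abs_le hxH h)

theorem IsConvexSubgroup.mem_of_nsmul_mem {K : AddSubgroup G} (hK : IsConvexSubgroup K)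
    {n : ℕ} (hn : n ≠ 0) {g : G} (h : n • g ∈ K) : g ∈ K := by
  have h1 : 1 ≤ n := Nat.one_le_iff_ne_zero.mpr hn
  rcases le_total 0 g with hg | hg
  · exact hK g (n • g) hg (by calc g = 1 • g := (one_nsmul g).symm
      _ ≤ n • g := nsmul_le_nsmul_left hg h1) h
  · have hg' : 0 ≤ -g := neg_nonneg.mpr hg
    have : -g ∈ K := hK (-g) (n • (-g)) hg'
      (by calc -g = 1 • (-g) := (one_nsmul _).symm
        _ ≤ n • (-g) := nsmul_le_nsmul_left hg' h1)
      (by rw [smul_neg]; exact neg_mem h)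
    simpa using neg_mem this

/-- If `x ∈ B` and `x ∈ A + pC` with `A ≤ B ≤ C`, `B` convex, then `x ∈ A + pB`. -/
theorem mem_sup_smul_of_mem {p : ℕ} (hp : p ≠ 0) {A B C : AddSubgroup G}
    (hB : IsConvexSubgroup B) (hAB : A ≤ B) {x : G}
    (hxB : x ∈ B) (hx : x ∈ A ⊔ smulSub p C) : x ∈ A ⊔ smulSub p B := by
  obtain ⟨a, ha, z, hz, rfl⟩ := AddSubgroup.mem_sup.mp hx
  obtain ⟨c, _, rfl⟩ := mem_smulSub.mp hz
  have hzB : p • c ∈ B := by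
    have : p • c = a + p • c - a := by abel
    rw [this]; exact sub_mem hxB (hAB ha)
  have hcB : c ∈ B := hB.mem_of_nsmul_mem hp hzB
  exact AddSubgroup.mem_sup.mpr ⟨a, ha, p • c, mem_smulSub.mpr ⟨c, hcB, rfl⟩, rfl⟩

theorem directedOn_Hset (p : ℕ) (a : G) :
    DirectedOn (· ≤ ·) {H : AddSubgroup G | IsConvexSubgroup H ∧ a ∉ H ⊔ smulSub p ⊤} := by
  rintro H hH K hK
  rcases convex_total hH.1 hK.1 with h | h
  · exact ⟨K, hK, h, le_rfl⟩
  · exact ⟨H, hH, le_rfl, h⟩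

theorem mem_Hsub_iff {p : ℕ} {a : G}
    (hne : ∃ H : AddSubgroup G, IsConvexSubgroup H ∧ a ∉ H ⊔ smulSub p ⊤) {x : G} :
    x ∈ Hsub p a ↔ ∃ H : AddSubgroup G, (IsConvexSubgroup H ∧ a ∉ H ⊔ smulSub p ⊤) ∧ x ∈ H := by
  have h := AddSubgroup.mem_sSup_of_directedOn
    (K := {H : AddSubgroup G | IsConvexSubgroup H ∧ a ∉ H ⊔ smulSub p ⊤})
    hne (directedOn_Hset p a) (x := x)
  rw [Hsub, h]
  simp only [Set.mem_setOf_eq]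

theorem Hsub_convex {p : ℕ} {a : G}
    (hne : ∃ H : AddSubgroup G, IsConvexSubgroup H ∧ a ∉ H ⊔ smulSub p ⊤) :
    IsConvexSubgroup (Hsub p a) := by
  intro g h hg hgh hh
  obtain ⟨H, hH, hhH⟩ := (mem_Hsub_iff hne).mp hh
  exact (mem_Hsub_iff hne).mpr ⟨H, hH, hH.1 g h hg hgh hhH⟩

theorem le_Hsub {p : ℕ} {a : G} {K : AddSubgroup G}
    (hK : IsConvexSubgroup K) (ha : a ∉ K ⊔ smulSub p ⊤) : K ≤ Hsub p a :=
  le_sSup ⟨hK, ha⟩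

theorem not_mem_Hsub_sup {p : ℕ} {a : G}
    (hne : ∃ H : AddSubgroup G, IsConvexSubgroup H ∧ a ∉ H ⊔ smulSub p ⊤) :
    a ∉ Hsub p a ⊔ smulSub p ⊤ := by
  intro h
  obtain ⟨b, hb, z, hz, rfl⟩ := AddSubgroup.mem_sup.mp h
  obtain ⟨H, hH, hbH⟩ := (mem_Hsub_iff hne).mp hb
  exact hH.2 (AddSubgroup.mem_sup.mpr ⟨b, hbH, z, hz, rfl⟩)

/-- Transfer of infinite relative index from `B` to a larger convex subgroup `B'`. -/
theorem relindex_transfer {p : ℕ} (hp : p ≠ 0) {H B B' : AddSubgroup G}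
    (hB : IsConvexSubgroup B) (hHB : H ≤ B) (hBB' : B ≤ B')
    (h0 : (H ⊔ smulSub p B).relIndex B = 0) :
    (H ⊔ smulSub p B').relIndex B' = 0 := by
  have hint : (H ⊔ smulSub p B') ⊓ B = H ⊔ smulSub p B := by
    apply le_antisymm
    · rintro x ⟨hx1, hx2⟩
      exact mem_sup_smul_of_mem hp hB hHB hx2 hx1
    · exact le_inf (sup_le (le_sup_left) ((smulSub_mono hBB').trans le_sup_right))
        (sup_le hHB smulSub_le)
  have h1 : (H ⊔ smulSub p B').relIndex B = 0 := by
    rw [← AddSubgroup.inf_relIndex_right, hint, AddSubgroup.inf_relIndex_right] at *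
    exact h0
  exact AddSubgroup.relIndex_eq_zero_of_le_right hBB' h1

/-- The key step: replace `A` by a minimal spine element between `A` and `B`. -/
theorem step {p : ℕ} (hp : p.Prime)
    (hfs : {H : AddSubgroup G | ∃ a : G, H = Hsub p a}.Finite)
    {A B : AddSubgroup G} (hA : IsConvexSubgroup A) (hB : IsConvexSubgroup B)
    (hAB : A ≤ B) (hinf : (A ⊔ smulSub p B).relIndex B = 0) :
    ∃ H : AddSubgroup G, (∃ a : G, H = Hsub p a) ∧ IsConvexSubgroup H ∧ A ≤ H ∧ H < B ∧
      (H ⊔ smulSub p B).relIndex B = 0 := by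
  have hp0 : p ≠ 0 := hp.ne_zero
  -- there is b ∈ B with b ∉ A + pG
  have hBnle : ¬ B ≤ A ⊔ smulSub p B := by
    intro hle
    have : (A ⊔ smulSub p B).relIndex B = 1 := AddSubgroup.relIndex_eq_one.mpr hle
    omega
  obtain ⟨b₀, hb₀B, hb₀⟩ := SetLike.not_le_iff_exists.mp hBnle
  have hb₀' : b₀ ∉ A ⊔ smulSub p ⊤ := fun h =>
    hb₀ (mem_sup_smul_of_mem hp0 hB hAB hb₀B h)
  -- the set of candidate spine elements
  set T : Set (AddSubgroup G) :=
    {H | ∃ b : G, b ∈ B ∧ b ∉ A ⊔ smulSub p ⊤ ∧ H = Hsub p b} with hT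
  have hTsub : T ⊆ {H : AddSubgroup G | ∃ a : G, H = Hsub p a} := by
    rintro H ⟨b, -, -, rfl⟩; exact ⟨b, rfl⟩
  have hTfin : T.Finite := hfs.subset hTsub
  have hTne : T.Nonempty := ⟨Hsub p b₀, b₀, hb₀B, hb₀', rfl⟩
  obtain ⟨H, hHT, hHmin⟩ := Set.Finite.exists_minimalFor id T hTfin hTne
  obtain ⟨a, haB, ha, rfl⟩ := hHT
  have hane : ∃ H : AddSubgroup G, IsConvexSubgroup H ∧ a ∉ H ⊔ smulSub p ⊤ := ⟨A, hA, ha⟩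
  have hHconv : IsConvexSubgroup (Hsub p a) := Hsub_convex hane
  have hAle : A ≤ Hsub p a := le_Hsub hA ha
  have haH : a ∉ Hsub p a := fun h =>
    not_mem_Hsub_sup hane (AddSubgroup.mem_sup_left h)
  have hHltB : Hsub p a < B := by
    rcases convex_total hHconv hB with h | h
    · exact lt_of_le_of_ne h (fun he => haH (he ▸ haB))
    · exact absurd (h haB) haH
  refine ⟨Hsub p a, ⟨a, rfl⟩, hHconv, hAle, hHltB, ?_⟩
  -- the crucial index claim, by minimality
  by_contra hne0
  have hle1 : A ⊔ smulSub p B ≤ Hsub p a ⊔ smulSub p B :=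
    sup_le (hAle.trans le_sup_left) le_sup_right
  have hle2 : Hsub p a ⊔ smulSub p B ≤ B := sup_le hHltB.le smulSub_le
  have hmul := AddSubgroup.relIndex_mul_relIndex (H := A ⊔ smulSub p B) (K := Hsub p a ⊔ smulSub p B) (L := B)
    hle1 hle2
  rw [hinf] at hmul
  have hz : (A ⊔ smulSub p B).relIndex (Hsub p a ⊔ smulSub p B) = 0 := by
    rcases Nat.mul_eq_zero.mp hmul with h | h
    · exact h
    · exact absurd h hne0
  have hnle : ¬ (Hsub p a ⊔ smulSub p B) ≤ A ⊔ smulSub p B := by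
    intro hle
    have : (A ⊔ smulSub p B).relIndex (Hsub p a ⊔ smulSub p B) = 1 :=
      AddSubgroup.relIndex_eq_one.mpr hle
    omega
  obtain ⟨x, hx1, hx2⟩ := SetLike.not_le_iff_exists.mp hnle
  obtain ⟨c, hcH, z, hz', rfl⟩ := AddSubgroup.mem_sup.mp hx1
  -- c ∈ Hsub p a, c ∉ A + pG
  have hc : c ∉ A ⊔ smulSub p ⊤ := by
    intro hcA
    have hxB : c + z ∈ B := hle2 hx1
    have : c + z ∈ A ⊔ smulSub p ⊤ := by
      refine add_mem hcA (AddSubgroup.mem_sup_right ?_)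
      exact smulSub_mono le_top hz'
    exact hx2 (mem_sup_smul_of_mem hp0 hB hAB hxB this)
  have hcB : c ∈ B := hHltB.le hcH
  have hcne : ∃ H : AddSubgroup G, IsConvexSubgroup H ∧ c ∉ H ⊔ smulSub p ⊤ := ⟨A, hA, hc⟩
  have hcnotmem : c ∉ Hsub p c := fun h =>
    not_mem_Hsub_sup hcne (AddSubgroup.mem_sup_left h)
  have hcConv : IsConvexSubgroup (Hsub p c) := Hsub_convex hcne
  have hcleH : Hsub p c ≤ Hsub p a := by
    rcases convex_total hcConv hHconv with h | h
    · exact h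
    · exact absurd (h hcH) hcnotmem
  have hcT : Hsub p c ∈ T := ⟨c, hcB, hc, rfl⟩
  have := hHmin (j := Hsub p c) hcT hcleH
  exact hcnotmem (this hcH)

end Aux

/-- Let `G` be a linearly ordered abelian group with finite spines and `p` a prime.
If there are convex subgroups `K 0 ⊊ … ⊊ K (n-1) ⊊ K n = G` with
`[K (i+1) : K i + p K (i+1)]` infinite for every `i < n`, then there are convex subgroups
`K' 0 ⊊ … ⊊ K' (n-1) ⊊ K' n = G` with the same property such that each `K' i` (`i < n`)
lies in the spine `S_p`, i.e. `K' i = H_p(a i)` for some `a i ∈ G`.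
(Infinite index is expressed by `AddSubgroup.relindex … = 0`.) -/
theorem kp_witnessed_in_spine {G : Type*} [AddCommGroup G] [LinearOrder G] [IsOrderedAddMonoid G]
    (hfs : ∀ q : ℕ, q.Prime → {H : AddSubgroup G | ∃ a : G, H = Hsub q a}.Finite)
    (p : ℕ) (hp : p.Prime) (n : ℕ) (K : ℕ → AddSubgroup G)
    (hconv : ∀ i ≤ n, IsConvexSubgroup (K i))
    (hchain : ∀ i j : ℕ, i < j → j ≤ n → K i < K j)
    (hKn : K n = ⊤)
    (hinf : ∀ i < n, (K i ⊔ smulSub p (K (i + 1))).relIndex (K (i + 1)) = 0) :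
    ∃ K' : ℕ → AddSubgroup G,
      (∀ i ≤ n, IsConvexSubgroup (K' i)) ∧
      (∀ i j : ℕ, i < j → j ≤ n → K' i < K' j) ∧
      K' n = ⊤ ∧
      (∀ i < n, (K' i ⊔ smulSub p (K' (i + 1))).relIndex (K' (i + 1)) = 0) ∧
      (∀ i < n, ∃ a : G, K' i = Hsub p a) := by
  have hex : ∀ i : ℕ, ∃ H : AddSubgroup G,
      (i < n → (∃ a : G, H = Hsub p a) ∧ IsConvexSubgroup H ∧ K i ≤ H ∧ H < K (i + 1) ∧
        (H ⊔ smulSub p (K (i + 1))).relIndex (K (i + 1)) = 0) ∧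
      (n ≤ i → H = ⊤) := by
    intro i
    by_cases hi : i < n
    · obtain ⟨H, hHa, hHc, hAH, hHB, hHi⟩ := step hp (hfs p hp)
        (hconv i hi.le) (hconv (i + 1) hi)
        (hchain i (i + 1) (Nat.lt_succ_self i) hi).le (hinf i hi)
      exact ⟨H, fun _ => ⟨hHa, hHc, hAH, hHB, hHi⟩, fun h => absurd hi (not_lt.mpr h)⟩
    · exact ⟨⊤, fun h => absurd h hi, fun _ => rfl⟩
  choose K' hK' using hex
  have htopconv : IsConvexSubgroup (⊤ : AddSubgroup G) := fun _ _ _ _ _ => trivial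
  have hKle : ∀ j ≤ n, K j ≤ K' j := by
    intro j hj
    rcases lt_or_eq_of_le hj with h | h
    · exact ((hK' j).1 h).2.2.1
    · rw [(hK' j).2 h.ge, h, hKn]
  refine ⟨K', ?_, ?_, (hK' n).2 le_rfl, ?_, fun i hi => ((hK' i).1 hi).1⟩
  · intro i hi
    rcases lt_or_eq_of_le hi with h | h
    · exact ((hK' i).1 h).2.1
    · rw [(hK' i).2 h.ge]; exact htopconv
  · intro i j hij hjn
    have hin : i < n := lt_of_lt_of_le hij hjn
    have h1 : K' i < K (i + 1) := ((hK' i).1 hin).2.2.2.1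
    have h2 : K (i + 1) ≤ K' j := by
      have : K (i + 1) ≤ K j := by
        rcases lt_or_eq_of_le (Nat.succ_le_of_lt hij) with h | h
        · exact (hchain (i + 1) j h hjn).le
        · exact (congrArg K h).le
      exact this.trans (hKle j hjn)
    exact lt_of_lt_of_le h1 h2
  · intro i hi
    have hbase : (K' i ⊔ smulSub p (K (i + 1))).relIndex (K (i + 1)) = 0 :=
      ((hK' i).1 hi).2.2.2.2
    have hHB : K' i ≤ K (i + 1) := ((hK' i).1 hi).2.2.2.1.le
    exact relindex_transfer hp.ne_zero (hconv (i + 1) hi) hHB (hKle (i + 1) hi) hbase
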